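/- arXiv:2603.26460 — 3 statements merged into one kernel-verified Lean document; each statement's English description precedes it below -/
import Mathlib

section
/- The Jacobian determinant of the map γ(w, τ₁², τ₂²) = (w τ₂² / (w² τ₂² + τ₁²), w² τ₂² + τ₁², τ₁² τ₂² / (w² τ₂² + τ₁²)), viewed as a smooth map on ℝ × (0,∞) × (0,∞), has absolute value equal to τ₂² / (w² τ₂² + τ₁²) at every point (w, τ₁², τ₂²). -/
open Matrix

/-- The parameter transformation between the two observationally equivalent
bivariate linear Gaussian SEMs. -/
noncomputable def gammaMap (p : ℝ × ℝ × ℝ) : ℝ × ℝ × ℝ :=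
  ⟨p.1 * p.2.2 / (p.1 ^ 2 * p.2.2 + p.2.1),
   p.1 ^ 2 * p.2.2 + p.2.1,
   p.2.1 * p.2.2 / (p.1 ^ 2 * p.2.2 + p.2.1)⟩

/-- The components of `gammaMap`. -/
noncomputable def gammaComp : Fin 3 → (ℝ × ℝ × ℝ) → ℝ
  | 0 => fun p => (gammaMap p).1
  | 1 => fun p => (gammaMap p).2.1
  | 2 => fun p => (gammaMap p).2.2

/-- Standard basis directions of `ℝ × ℝ × ℝ`. -/
def stdDir : Fin 3 → ℝ × ℝ × ℝ
  | 0 => (1, 0, 0)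
  | 1 => (0, 1, 0)
  | 2 => (0, 0, 1)

/-- The Jacobian matrix of `gammaMap` at a point. -/
noncomputable def gammaJacobian (p : ℝ × ℝ × ℝ) : Matrix (Fin 3) (Fin 3) ℝ :=
  Matrix.of fun i j => fderiv ℝ (gammaComp i) p (stdDir j)

section aux

variable (w t1 t2 : ℝ)

lemma aux_fderiv0 (hd : w^2*t2+t1 ≠ 0) (v : ℝ×ℝ×ℝ) :
    fderiv ℝ (gammaComp 0) (w,t1,t2) v =
      ((w^2*t2+t1)*(v.1*t2 + w*v.2.2) - w*t2*(2*w*t2*v.1 + v.2.1 + w^2*v.2.2))/(w^2*t2+t1)^2 := by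
  have hx : HasFDerivAt (fun p : ℝ×ℝ×ℝ => p.1) (ContinuousLinearMap.fst ℝ ℝ (ℝ×ℝ)) (w,t1,t2) := hasFDerivAt_fst
  have hy : HasFDerivAt (fun p : ℝ×ℝ×ℝ => p.2.1) ((ContinuousLinearMap.fst ℝ ℝ ℝ).comp (ContinuousLinearMap.snd ℝ ℝ (ℝ×ℝ))) (w,t1,t2) := hasFDerivAt_fst.comp _ hasFDerivAt_snd
  have hz : HasFDerivAt (fun p : ℝ×ℝ×ℝ => p.2.2) ((ContinuousLinearMap.snd ℝ ℝ ℝ).comp (ContinuousLinearMap.snd ℝ ℝ (ℝ×ℝ))) (w,t1,t2) := hasFDerivAt_snd.comp _ hasFDerivAt_snd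
  have hsq : HasFDerivAt (fun p : ℝ×ℝ×ℝ => p.1^2) (w • ContinuousLinearMap.fst ℝ ℝ (ℝ×ℝ) + w • ContinuousLinearMap.fst ℝ ℝ (ℝ×ℝ)) (w,t1,t2) := by
    simpa [pow_two] using (show HasFDerivAt (fun p : ℝ×ℝ×ℝ => p.1*p.1) _ _ from hx.mul hx)
  have hden := (hsq.mul hz).add hy
  have hinv := (hasDerivAt_inv hd).comp_hasFDerivAt (w,t1,t2) hden
  have hf := (hx.mul hz).mul hinv
  have hf' : HasFDerivAt (fun p : ℝ×ℝ×ℝ => p.1*p.2.2*(p.1^2*p.2.2+p.2.1)⁻¹) _ (w,t1,t2) := hf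
  have hg : gammaComp 0 = fun p : ℝ×ℝ×ℝ => p.1*p.2.2*(p.1^2*p.2.2+p.2.1)⁻¹ := by
    funext p; simp [gammaComp, gammaMap, div_eq_mul_inv]
  rw [hg, hf'.fderiv]
  simp [ContinuousLinearMap.add_apply, ContinuousLinearMap.smul_apply,
    ContinuousLinearMap.comp_apply]
  field_simp
  ring

lemma aux_fderiv1 (v : ℝ×ℝ×ℝ) :
    fderiv ℝ (gammaComp 1) (w,t1,t2) v = 2*w*t2*v.1 + v.2.1 + w^2*v.2.2 := by
  have hx : HasFDerivAt (fun p : ℝ×ℝ×ℝ => p.1) (ContinuousLinearMap.fst ℝ ℝ (ℝ×ℝ)) (w,t1,t2) := hasFDerivAt_fst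
  have hy : HasFDerivAt (fun p : ℝ×ℝ×ℝ => p.2.1) ((ContinuousLinearMap.fst ℝ ℝ ℝ).comp (ContinuousLinearMap.snd ℝ ℝ (ℝ×ℝ))) (w,t1,t2) := hasFDerivAt_fst.comp _ hasFDerivAt_snd
  have hz : HasFDerivAt (fun p : ℝ×ℝ×ℝ => p.2.2) ((ContinuousLinearMap.snd ℝ ℝ ℝ).comp (ContinuousLinearMap.snd ℝ ℝ (ℝ×ℝ))) (w,t1,t2) := hasFDerivAt_snd.comp _ hasFDerivAt_snd
  have hsq : HasFDerivAt (fun p : ℝ×ℝ×ℝ => p.1^2) (w • ContinuousLinearMap.fst ℝ ℝ (ℝ×ℝ) + w • ContinuousLinearMap.fst ℝ ℝ (ℝ×ℝ)) (w,t1,t2) := by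
    simpa [pow_two] using (show HasFDerivAt (fun p : ℝ×ℝ×ℝ => p.1*p.1) _ _ from hx.mul hx)
  have hden := (hsq.mul hz).add hy
  have hg : gammaComp 1 = fun p : ℝ×ℝ×ℝ => p.1^2*p.2.2+p.2.1 := by
    funext p; simp [gammaComp, gammaMap]
  rw [hg, (show HasFDerivAt (fun p : ℝ×ℝ×ℝ => p.1^2*p.2.2+p.2.1) _ _ from hden).fderiv]
  simp [ContinuousLinearMap.add_apply, ContinuousLinearMap.smul_apply,
    ContinuousLinearMap.comp_apply]
  ring

lemma aux_fderiv2 (hd : w^2*t2+t1 ≠ 0) (v : ℝ×ℝ×ℝ) :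
    fderiv ℝ (gammaComp 2) (w,t1,t2) v =
      ((w^2*t2+t1)*(v.2.1*t2 + t1*v.2.2) - t1*t2*(2*w*t2*v.1 + v.2.1 + w^2*v.2.2))/(w^2*t2+t1)^2 := by
  have hx : HasFDerivAt (fun p : ℝ×ℝ×ℝ => p.1) (ContinuousLinearMap.fst ℝ ℝ (ℝ×ℝ)) (w,t1,t2) := hasFDerivAt_fst
  have hy : HasFDerivAt (fun p : ℝ×ℝ×ℝ => p.2.1) ((ContinuousLinearMap.fst ℝ ℝ ℝ).comp (ContinuousLinearMap.snd ℝ ℝ (ℝ×ℝ))) (w,t1,t2) := hasFDerivAt_fst.comp _ hasFDerivAt_snd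
  have hz : HasFDerivAt (fun p : ℝ×ℝ×ℝ => p.2.2) ((ContinuousLinearMap.snd ℝ ℝ ℝ).comp (ContinuousLinearMap.snd ℝ ℝ (ℝ×ℝ))) (w,t1,t2) := hasFDerivAt_snd.comp _ hasFDerivAt_snd
  have hsq : HasFDerivAt (fun p : ℝ×ℝ×ℝ => p.1^2) (w • ContinuousLinearMap.fst ℝ ℝ (ℝ×ℝ) + w • ContinuousLinearMap.fst ℝ ℝ (ℝ×ℝ)) (w,t1,t2) := by
    simpa [pow_two] using (show HasFDerivAt (fun p : ℝ×ℝ×ℝ => p.1*p.1) _ _ from hx.mul hx)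
  have hden := (hsq.mul hz).add hy
  have hinv := (hasDerivAt_inv hd).comp_hasFDerivAt (w,t1,t2) hden
  have hf := (hy.mul hz).mul hinv
  have hf' : HasFDerivAt (fun p : ℝ×ℝ×ℝ => p.2.1*p.2.2*(p.1^2*p.2.2+p.2.1)⁻¹) _ (w,t1,t2) := hf
  have hg : gammaComp 2 = fun p : ℝ×ℝ×ℝ => p.2.1*p.2.2*(p.1^2*p.2.2+p.2.1)⁻¹ := by
    funext p; simp [gammaComp, gammaMap, div_eq_mul_inv]
  rw [hg, hf'.fderiv]
  simp [ContinuousLinearMap.add_apply, ContinuousLinearMap.smul_apply,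
    ContinuousLinearMap.comp_apply]
  field_simp
  ring

end aux

theorem stmt_2 (w τ1 τ2 : ℝ) (h1 : 0 < τ1) (h2 : 0 < τ2) :
    |(gammaJacobian (w, τ1, τ2)).det| = τ2 / (w ^ 2 * τ2 + τ1) := by
  have hdpos : 0 < w ^ 2 * τ2 + τ1 := by positivity
  have hd : w ^ 2 * τ2 + τ1 ≠ 0 := ne_of_gt hdpos
  have hdet : (gammaJacobian (w, τ1, τ2)).det = τ2 / (w ^ 2 * τ2 + τ1) := by
    rw [Matrix.det_fin_three]
    simp only [gammaJacobian, Matrix.of_apply]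
    rw [aux_fderiv0 w τ1 τ2 hd, aux_fderiv0 w τ1 τ2 hd, aux_fderiv0 w τ1 τ2 hd,
        aux_fderiv1 w τ1 τ2, aux_fderiv1 w τ1 τ2, aux_fderiv1 w τ1 τ2,
        aux_fderiv2 w τ1 τ2 hd, aux_fderiv2 w τ1 τ2 hd, aux_fderiv2 w τ1 τ2 hd]
    simp only [stdDir]
    field_simp
    ring
  rw [hdet, abs_of_pos (div_pos h2 hdpos)]
end

section
/- Under the model with structure X(2) → X(1) and given data with S₂ > 0 and S₁S₂ − S₁₂² > 0, and the analogously defined reverse model X(1) → X(2) with S₁ > 0, the maximized log-likelihoods of the two models are equal. Equivalently, if ŵ₁ = S₁₂/S₂, τ̂₁² = (S₁S₂−S₁₂²)/(nS₂), τ̂₂² = S₂/n are the MLEs of the first model and ŵ₂ = S₁₂/S₁, σ̂₁² = S₁/n, σ̂₂² = (S₁S₂−S₁₂²)/(nS₁) the MLEs of the second, then ℓ₁(ŵ₁, τ̂₁², τ̂₂²) = ℓ₂(ŵ₂, σ̂₁², σ̂₂²). Moreover (ŵ₂, σ̂₁², σ̂₂²) = γ(ŵ₁, τ̂₁², τ̂₂²).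 -/
/-- Log-likelihood of the model `X(1) = w X(2) + ε₁, X(2) = ε₂`. -/
noncomputable def loglik1 (n : ℕ) (S1 S2 S12 : ℝ) (w τ1 τ2 : ℝ) : ℝ :=
  -(n : ℝ) * Real.log (2 * Real.pi) - (n : ℝ) / 2 * Real.log (τ1 * τ2)
    - (S1 - 2 * w * S12 + w ^ 2 * S2) / (2 * τ1) - S2 / (2 * τ2)

/-- Log-likelihood of the reverse model, with the roles of the indices 1 and 2 swapped. -/
noncomputable def loglik2 (n : ℕ) (S1 S2 S12 : ℝ) (w σ1 σ2 : ℝ) : ℝ :=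
  -(n : ℝ) * Real.log (2 * Real.pi) - (n : ℝ) / 2 * Real.log (σ2 * σ1)
    - (S2 - 2 * w * S12 + w ^ 2 * S1) / (2 * σ2) - S1 / (2 * σ1)

theorem stmt_4 (n : ℕ) (x1 x2 : Fin n → ℝ)
    (S1 S2 S12 : ℝ)
    (hS1 : S1 = ∑ i, x1 i ^ 2) (hS2 : S2 = ∑ i, x2 i ^ 2)
    (hS12 : S12 = ∑ i, x1 i * x2 i)
    (hS1pos : 0 < S1) (hS2pos : 0 < S2) (hdet : 0 < S1 * S2 - S12 ^ 2) :
    let wHat1 := S12 / S2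
    let t1Hat := (S1 * S2 - S12 ^ 2) / ((n : ℝ) * S2)
    let t2Hat := S2 / (n : ℝ)
    let wHat2 := S12 / S1
    let s1Hat := S1 / (n : ℝ)
    let s2Hat := (S1 * S2 - S12 ^ 2) / ((n : ℝ) * S1)
    loglik1 n S1 S2 S12 wHat1 t1Hat t2Hat = loglik2 n S1 S2 S12 wHat2 s1Hat s2Hat ∧
      (wHat2, s1Hat, s2Hat) = gammaMap (wHat1, t1Hat, t2Hat) := by
  have hn : 0 < (n : ℝ) := by
    rcases Nat.eq_zero_or_pos n with h | h
    · subst h; simp at hS1; linarith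
    · exact_mod_cast h
  intro wHat1 t1Hat t2Hat wHat2 s1Hat s2Hat
  have hS1ne : S1 ≠ 0 := ne_of_gt hS1pos
  have hS2ne : S2 ≠ 0 := ne_of_gt hS2pos
  have hdne : S1 * S2 - S12 ^ 2 ≠ 0 := ne_of_gt hdet
  have hnne : (n : ℝ) ≠ 0 := ne_of_gt hn
  constructor
  · unfold loglik1 loglik2
    have hlog : t1Hat * t2Hat = s2Hat * s1Hat := by
      simp only [t1Hat, t2Hat, s1Hat, s2Hat]; field_simp
    rw [hlog]
    have h1 : (S1 - 2 * wHat1 * S12 + wHat1 ^ 2 * S2) / (2 * t1Hat) = (n : ℝ) / 2 := by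
      simp only [wHat1, t1Hat]; field_simp; ring
    have h2 : S2 / (2 * t2Hat) = (n : ℝ) / 2 := by
      simp only [t2Hat]; field_simp
    have h3 : (S2 - 2 * wHat2 * S12 + wHat2 ^ 2 * S1) / (2 * s2Hat) = (n : ℝ) / 2 := by
      simp only [wHat2, s2Hat]; field_simp; rw [div_eq_one_iff_eq (by rw [mul_comm S2 S1]; exact hdne)]; ring
    have h4 : S1 / (2 * s1Hat) = (n : ℝ) / 2 := by
      simp only [s1Hat]; field_simp
    rw [h1, h2, h3, h4]
  · have key : wHat1 ^ 2 * t2Hat + t1Hat = s1Hat := by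
      simp only [wHat1, t1Hat, t2Hat, s1Hat]; field_simp; ring
    simp only [gammaMap, key]
    refine Prod.ext ?_ (Prod.ext rfl ?_)
    · simp only [wHat1, t2Hat, wHat2, s1Hat]; field_simp
    · simp only [t1Hat, t2Hat, s1Hat, s2Hat]; field_simp
end

section
/- Fix w* ≠ 0, τ₁*², τ₂*² > 0, y ≠ 0, and η ∈ (0,1). Let D₂₃ = (η/2) log(1 + w*²τ₁*²/τ₂*²) and D₂₁ = D₂₃ + (1/2) log(1 − η² w*²τ₁*² / (η(w*²τ₁*² + τ₂*²) + (1−η)y²)). Then 0 < η² w*²τ₁*² / (η(w*²τ₁*² + τ₂*²) + (1−η)y²) < 1 and D₂₁ < D₂₃. -/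
theorem stmt_17 (w τ1 τ2 y η : ℝ) (hw : w ≠ 0) (h1 : 0 < τ1) (h2 : 0 < τ2)
    (hy : y ≠ 0) (hη : η ∈ Set.Ioo (0 : ℝ) 1) :
    let D23 := η / 2 * Real.log (1 + w ^ 2 * τ1 / τ2)
    let q := η ^ 2 * w ^ 2 * τ1 / (η * (w ^ 2 * τ1 + τ2) + (1 - η) * y ^ 2)
    let D21 := D23 + (1 / 2) * Real.log (1 - q)
    0 < q ∧ q < 1 ∧ D21 < D23 := by
  obtain ⟨hη0, hη1⟩ := hη
  intro D23 q D21
  have hw2 : 0 < w ^ 2 := by positivity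
  have hy2 : 0 < y ^ 2 := by positivity
  have hd : 0 < η * (w ^ 2 * τ1 + τ2) + (1 - η) * y ^ 2 := by
    have : 0 < 1 - η := by linarith
    positivity
  have hq0 : 0 < q := by
    have hn : 0 < η ^ 2 * w ^ 2 * τ1 := by positivity
    exact div_pos hn hd
  have hq1 : q < 1 := by
    rw [div_lt_one hd]
    nlinarith [sq_nonneg η, mul_pos hw2 h1, mul_pos hη0 h2,
      mul_pos (show (0:ℝ) < 1 - η by linarith) hy2,
      mul_pos (mul_pos hη0 (show (0:ℝ) < 1 - η by linarith)) (mul_pos hw2 h1)]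
  refine ⟨hq0, hq1, ?_⟩
  have hlog : Real.log (1 - q) < 0 := by
    apply Real.log_neg <;> linarith
  show D23 + (1 / 2) * Real.log (1 - q) < D23
  nlinarith [hlog]
end
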